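/- Let F₄ = F₂(α) with α² = α + 1 and let R = F₄[x]/(x²), a finite chain ring with maximal ideal ⟨x⟩, nilpotency index s = 2, and residue field of size q = 4, so M = 4/3. Let C ⊆ R⁶ be the linear code generated by the three rows (1, α, 1, α, α, 1), (0, x, 0, x, (α+1)x, αx), (0, 0, x, x, x, x). Then C has rank 3, its minimum homogeneous distance equals 16/3, so C is MHD (16/3 > (4/3)·(6 − 3) = 4), and C is not contained in ⟨x⟩⁶ (it contains a codeword with some coordinate not in ⟨x⟩). -/

import Mathlib

open scoped BigOperators Classical

/-- The normalized homogeneous weight on a finite chain ring with maximal ideal `⟨γ⟩`,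
nilpotency index `s` and residue field of size `q`. -/
noncomputable def wtHom {R : Type*} [CommRing R] (γ : R) (s q : ℕ) (x : R) : ℚ :=
  if x = 0 then 0
  else if x ∈ Ideal.span {γ ^ (s - 1)} then (q : ℚ) / ((q : ℚ) - 1)
  else 1

/-- Homogeneous weight of a vector: the sum of the weights of its coordinates. -/
noncomputable def wtHomV {R : Type*} [CommRing R] (γ : R) (s q : ℕ) {n : ℕ}
    (v : Fin n → R) : ℚ :=
  ∑ i, wtHom γ s q (v i)

/-- Hamming weight of a vector: the number of nonzero coordinates. -/
noncomputable def hWt {R : Type*} [Zero R] {n : ℕ} (v : Fin n → R) : ℕ :=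
  Nat.card {i : Fin n // v i ≠ 0}

/-- `K` is the rank of the code `C`: the least cardinality of a generating set of `C`
as an `R`-module. -/
def IsCodeRank {R : Type*} [CommRing R] {n : ℕ} (C : Submodule R (Fin n → R)) (K : ℕ) : Prop :=
  IsLeast {k : ℕ | ∃ S : Finset (Fin n → R),
    S.card = k ∧ Submodule.span R (S : Set (Fin n → R)) = C} K

/-- The socle of a code: the codewords all of whose coordinates lie in `⟨γ^(s-1)⟩`. -/
def socleCode {R : Type*} [CommRing R] (γ : R) (s : ℕ) {n : ℕ}
    (C : Submodule R (Fin n → R)) : Submodule R (Fin n → R) :=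
  C ⊓ Submodule.pi Set.univ (fun _ : Fin n => Ideal.span {γ ^ (s - 1)})

/-- The chain ring `F₄[x]/(x²)`. -/
abbrev RChain (F : Type*) [Field F] : Type _ :=
  AdjoinRoot (Polynomial.X ^ 2 : Polynomial F)

set_option maxHeartbeats 1600000

namespace MHDAux

open Polynomial

variable {F : Type*} [Field F]

noncomputable abbrev γ' (F : Type*) [Field F] : RChain F := AdjoinRoot.root _

local notation "Af" => algebraMap F (RChain F)

lemma gam_sq : (γ' F) ^ 2 = 0 := by
  have h : (γ' F) = AdjoinRoot.mk (X^2 : F[X]) X := (AdjoinRoot.mk_X).symm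
  rw [h, ← map_pow, AdjoinRoot.mk_self]

lemma algebraMap_eq_mk (a : F) :
    algebraMap F (RChain F) a = AdjoinRoot.mk (X^2 : F[X]) (C a) := by
  rw [AdjoinRoot.algebraMap_eq]; rfl

lemma repr_zero {a b : F}
    (h : algebraMap F (RChain F) a + algebraMap F (RChain F) b * γ' F = 0) :
    a = 0 ∧ b = 0 := by
  have h2 : AdjoinRoot.mk (X^2 : F[X]) (C a + C b * X) = 0 := by
    rw [map_add, map_mul, AdjoinRoot.mk_X, ← algebraMap_eq_mk, ← algebraMap_eq_mk]
    exact h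
  have hdvd : (X^2 : F[X]) ∣ C a + C b * X := AdjoinRoot.mk_eq_zero.mp h2
  by_contra hab
  have hp : (C a + C b * X : F[X]) ≠ 0 := by
    intro h0
    apply hab
    constructor
    · have := congrArg (fun p => Polynomial.coeff p 0) h0
      simpa using this
    · have := congrArg (fun p => Polynomial.coeff p 1) h0
      simpa using this
  have hdeg : degree (X^2 : F[X]) ≤ degree (C a + C b * X) :=
    Polynomial.degree_le_of_dvd hdvd hp
  have hle : degree (C a + C b * X : F[X]) ≤ 1 := by
    rw [add_comm]
    exact Polynomial.degree_linear_le
  rw [Polynomial.degree_X_pow] at hdeg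
  have hcon : (2 : WithBot ℕ) ≤ 1 := le_trans hdeg hle
  norm_num at hcon

lemma repr_exists (r : RChain F) :
    ∃ a b : F, r = algebraMap F (RChain F) a + algebraMap F (RChain F) b * γ' F := by
  obtain ⟨p, rfl⟩ := AdjoinRoot.mk_surjective r
  have hm : (X^2 : F[X]).Monic := Polynomial.monic_X_pow 2
  have hsplit := Polynomial.modByMonic_add_div p (X^2 : F[X])
  have hdeg : (p %ₘ (X^2 : F[X])).degree < 2 := by
    simpa using Polynomial.degree_modByMonic_lt p hm
  have hle : (p %ₘ (X^2 : F[X])).degree ≤ 1 := by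
    generalize hD : (p %ₘ (X^2 : F[X])).degree = D at hdeg ⊢
    rcases D with _ | n
    · exact bot_le
    · have hn : n < 2 := WithBot.coe_lt_coe.mp hdeg
      exact WithBot.coe_le_coe.mpr (by omega)
  refine ⟨(p %ₘ (X^2 : F[X])).coeff 0, (p %ₘ (X^2 : F[X])).coeff 1, ?_⟩
  conv_lhs => rw [← hsplit]
  rw [map_add, map_mul, AdjoinRoot.mk_self, zero_mul, add_zero]
  conv_lhs => rw [Polynomial.eq_X_add_C_of_degree_le_one hle]
  rw [map_add, map_mul, AdjoinRoot.mk_X, ← algebraMap_eq_mk, ← algebraMap_eq_mk]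
  ring

lemma mem_span_gam_iff {a b : F} :
    (algebraMap F (RChain F) a + algebraMap F (RChain F) b * γ' F
      ∈ Ideal.span {γ' F}) ↔ a = 0 := by
  constructor
  · intro h
    obtain ⟨t, ht⟩ := Ideal.mem_span_singleton'.mp h
    obtain ⟨c, d, rfl⟩ := repr_exists t
    have h0 : algebraMap F (RChain F) a + algebraMap F (RChain F) (b - c) * γ' F = 0 := by
      have hsq := gam_sq (F := F)
      rw [map_sub]
      linear_combination -ht + algebraMap F (RChain F) d * hsq
    exact (repr_zero h0).1
  · rintro rfl
    rw [map_zero, zero_add]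
    exact Ideal.mem_span_singleton'.mpr ⟨algebraMap F (RChain F) b, rfl⟩

noncomputable def g1 (α : F) : Fin 6 → RChain F :=
  ![1, algebraMap F (RChain F) α, 1, algebraMap F (RChain F) α,
    algebraMap F (RChain F) α, 1]

noncomputable def g2 (α : F) : Fin 6 → RChain F :=
  ![0, AdjoinRoot.root _, 0, AdjoinRoot.root _,
    (algebraMap F (RChain F) α + 1) * AdjoinRoot.root _,
    algebraMap F (RChain F) α * AdjoinRoot.root _]

noncomputable def g3 (F : Type*) [Field F] : Fin 6 → RChain F :=
  ![0, 0, AdjoinRoot.root _, AdjoinRoot.root _, AdjoinRoot.root _, AdjoinRoot.root _]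

noncomputable def Evec (α a b v w : F) : Fin 6 → RChain F :=
  ![
    Af (a) + Af (b) * γ' F,
    Af (a*α) + Af (b*α+v) * γ' F,
    Af (a) + Af (b+w) * γ' F,
    Af (a*α) + Af (b*α+v+w) * γ' F,
    Af (a*α) + Af (b*α+v*α+v+w) * γ' F,
    Af (a) + Af (b+v*α+w) * γ' F]

lemma Evec_apply0 (α a b v w : F) : Evec α a b v w 0 = Af (a) + Af (b) * γ' F := rfl

lemma Evec_apply1 (α a b v w : F) : Evec α a b v w 1 = Af (a*α) + Af (b*α+v) * γ' F := rfl

lemma Evec_apply2 (α a b v w : F) : Evec α a b v w 2 = Af (a) + Af (b+w) * γ' F := rfl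

lemma Evec_apply3 (α a b v w : F) : Evec α a b v w 3 = Af (a*α) + Af (b*α+v+w) * γ' F := rfl

lemma Evec_apply4 (α a b v w : F) : Evec α a b v w 4 = Af (a*α) + Af (b*α+v*α+v+w) * γ' F := rfl

lemma Evec_apply5 (α a b v w : F) : Evec α a b v w 5 = Af (a) + Af (b+v*α+w) * γ' F := rfl

lemma Evec_g1 (α : F) : Evec α 1 0 0 0 = g1 α := by
  funext i
  fin_cases i
  · show Af (1) + Af (0) * γ' F = 1
    simp only [map_add, map_mul, map_one, map_zero, zero_mul, one_mul, mul_one, add_zero, zero_add]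
  · show Af (1*α) + Af (0*α+0) * γ' F = Af α
    simp only [map_add, map_mul, map_one, map_zero, zero_mul, one_mul, mul_one, add_zero, zero_add]
  · show Af (1) + Af (0+0) * γ' F = 1
    simp only [map_add, map_mul, map_one, map_zero, zero_mul, one_mul, mul_one, add_zero, zero_add]
  · show Af (1*α) + Af (0*α+0+0) * γ' F = Af α
    simp only [map_add, map_mul, map_one, map_zero, zero_mul, one_mul, mul_one, add_zero, zero_add]
  · show Af (1*α) + Af (0*α+0*α+0+0) * γ' F = Af α
    simp only [map_add, map_mul, map_one, map_zero, zero_mul, one_mul, mul_one, add_zero, zero_add]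
  · show Af (1) + Af (0+0*α+0) * γ' F = 1
    simp only [map_add, map_mul, map_one, map_zero, zero_mul, one_mul, mul_one, add_zero, zero_add]

lemma Evec_g2 (α : F) : Evec α 0 0 1 0 = g2 α := by
  funext i
  fin_cases i
  · show Af (0) + Af (0) * γ' F = 0
    simp only [map_add, map_mul, map_one, map_zero, zero_mul, one_mul, mul_one, add_zero, zero_add]
  · show Af (0*α) + Af (0*α+1) * γ' F = γ' F
    simp only [map_add, map_mul, map_one, map_zero, zero_mul, one_mul, mul_one, add_zero, zero_add]
  · show Af (0) + Af (0+0) * γ' F = 0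
    simp only [map_add, map_mul, map_one, map_zero, zero_mul, one_mul, mul_one, add_zero, zero_add]
  · show Af (0*α) + Af (0*α+1+0) * γ' F = γ' F
    simp only [map_add, map_mul, map_one, map_zero, zero_mul, one_mul, mul_one, add_zero, zero_add]
  · show Af (0*α) + Af (0*α+1*α+1+0) * γ' F = (Af α + 1) * γ' F
    simp only [map_add, map_mul, map_one, map_zero, zero_mul, one_mul, mul_one, add_zero, zero_add]
  · show Af (0) + Af (0+1*α+0) * γ' F = Af α * γ' F
    simp only [map_add, map_mul, map_one, map_zero, zero_mul, one_mul, mul_one, add_zero, zero_add]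

lemma Evec_g3 (α : F) : Evec α 0 0 0 1 = g3 F := by
  funext i
  fin_cases i
  · show Af (0) + Af (0) * γ' F = 0
    simp only [map_add, map_mul, map_one, map_zero, zero_mul, one_mul, mul_one, add_zero, zero_add]
  · show Af (0*α) + Af (0*α+0) * γ' F = 0
    simp only [map_add, map_mul, map_one, map_zero, zero_mul, one_mul, mul_one, add_zero, zero_add]
  · show Af (0) + Af (0+1) * γ' F = γ' F
    simp only [map_add, map_mul, map_one, map_zero, zero_mul, one_mul, mul_one, add_zero, zero_add]
  · show Af (0*α) + Af (0*α+0+1) * γ' F = γ' F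
    simp only [map_add, map_mul, map_one, map_zero, zero_mul, one_mul, mul_one, add_zero, zero_add]
  · show Af (0*α) + Af (0*α+0*α+0+1) * γ' F = γ' F
    simp only [map_add, map_mul, map_one, map_zero, zero_mul, one_mul, mul_one, add_zero, zero_add]
  · show Af (0) + Af (0+0*α+1) * γ' F = γ' F
    simp only [map_add, map_mul, map_one, map_zero, zero_mul, one_mul, mul_one, add_zero, zero_add]

lemma Evec_zero (α : F) : Evec α 0 0 0 0 = (0 : Fin 6 → RChain F) := by
  funext i
  fin_cases i
  · show Af (0) + Af (0) * γ' F = (0 : RChain F)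
    simp only [map_add, map_mul, map_one, map_zero, zero_mul, one_mul, mul_one, add_zero, zero_add]
  · show Af (0*α) + Af (0*α+0) * γ' F = (0 : RChain F)
    simp only [map_add, map_mul, map_one, map_zero, zero_mul, one_mul, mul_one, add_zero, zero_add]
  · show Af (0) + Af (0+0) * γ' F = (0 : RChain F)
    simp only [map_add, map_mul, map_one, map_zero, zero_mul, one_mul, mul_one, add_zero, zero_add]
  · show Af (0*α) + Af (0*α+0+0) * γ' F = (0 : RChain F)
    simp only [map_add, map_mul, map_one, map_zero, zero_mul, one_mul, mul_one, add_zero, zero_add]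
  · show Af (0*α) + Af (0*α+0*α+0+0) * γ' F = (0 : RChain F)
    simp only [map_add, map_mul, map_one, map_zero, zero_mul, one_mul, mul_one, add_zero, zero_add]
  · show Af (0) + Af (0+0*α+0) * γ' F = (0 : RChain F)
    simp only [map_add, map_mul, map_one, map_zero, zero_mul, one_mul, mul_one, add_zero, zero_add]

lemma Evec_add (α a b v w a' b' v' w' : F) :
    Evec α a b v w + Evec α a' b' v' w' = Evec α (a+a') (b+b') (v+v') (w+w') := by
  funext i
  fin_cases i
  · show (Af (a) + Af (b) * γ' F) + (Af (a') + Af (b') * γ' F) = Af ((a+a')) + Af ((b+b')) * γ' F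
    simp only [map_add, map_mul]; ring
  · show (Af (a*α) + Af (b*α+v) * γ' F) + (Af (a'*α) + Af (b'*α+v') * γ' F) = Af ((a+a')*α) + Af ((b+b')*α+(v+v')) * γ' F
    simp only [map_add, map_mul]; ring
  · show (Af (a) + Af (b+w) * γ' F) + (Af (a') + Af (b'+w') * γ' F) = Af ((a+a')) + Af ((b+b')+(w+w')) * γ' F
    simp only [map_add, map_mul]; ring
  · show (Af (a*α) + Af (b*α+v+w) * γ' F) + (Af (a'*α) + Af (b'*α+v'+w') * γ' F) = Af ((a+a')*α) + Af ((b+b')*α+(v+v')+(w+w')) * γ' F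
    simp only [map_add, map_mul]; ring
  · show (Af (a*α) + Af (b*α+v*α+v+w) * γ' F) + (Af (a'*α) + Af (b'*α+v'*α+v'+w') * γ' F) = Af ((a+a')*α) + Af ((b+b')*α+(v+v')*α+(v+v')+(w+w')) * γ' F
    simp only [map_add, map_mul]; ring
  · show (Af (a) + Af (b+v*α+w) * γ' F) + (Af (a') + Af (b'+v'*α+w') * γ' F) = Af ((a+a')) + Af ((b+b')+(v+v')*α+(w+w')) * γ' F
    simp only [map_add, map_mul]; ring

lemma Evec_smulA (α t a b v w : F) :
    algebraMap F (RChain F) t • Evec α a b v w = Evec α (t*a) (t*b) (t*v) (t*w) := by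
  funext i
  fin_cases i
  · show Af t * (Af (a) + Af (b) * γ' F) = Af ((t*a)) + Af ((t*b)) * γ' F
    simp only [map_add, map_mul]; ring
  · show Af t * (Af (a*α) + Af (b*α+v) * γ' F) = Af ((t*a)*α) + Af ((t*b)*α+(t*v)) * γ' F
    simp only [map_add, map_mul]; ring
  · show Af t * (Af (a) + Af (b+w) * γ' F) = Af ((t*a)) + Af ((t*b)+(t*w)) * γ' F
    simp only [map_add, map_mul]; ring
  · show Af t * (Af (a*α) + Af (b*α+v+w) * γ' F) = Af ((t*a)*α) + Af ((t*b)*α+(t*v)+(t*w)) * γ' F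
    simp only [map_add, map_mul]; ring
  · show Af t * (Af (a*α) + Af (b*α+v*α+v+w) * γ' F) = Af ((t*a)*α) + Af ((t*b)*α+(t*v)*α+(t*v)+(t*w)) * γ' F
    simp only [map_add, map_mul]; ring
  · show Af t * (Af (a) + Af (b+v*α+w) * γ' F) = Af ((t*a)) + Af ((t*b)+(t*v)*α+(t*w)) * γ' F
    simp only [map_add, map_mul]; ring

lemma Evec_smulG (α a b v w : F) :
    γ' F • Evec α a b v w = Evec α 0 a 0 0 := by
  have hsq := gam_sq (F := F)
  funext i
  fin_cases i
  · show γ' F * (Af (a) + Af (b) * γ' F) = Af (0) + Af (a) * γ' F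
    simp only [map_add, map_mul, map_one, map_zero, zero_mul, one_mul, mul_one, add_zero, zero_add]
    linear_combination (Af b) * hsq
  · show γ' F * (Af (a*α) + Af (b*α+v) * γ' F) = Af (0*α) + Af (a*α+0) * γ' F
    simp only [map_add, map_mul, map_one, map_zero, zero_mul, one_mul, mul_one, add_zero, zero_add]
    linear_combination (Af b * Af α + Af v) * hsq
  · show γ' F * (Af (a) + Af (b+w) * γ' F) = Af (0) + Af (a+0) * γ' F
    simp only [map_add, map_mul, map_one, map_zero, zero_mul, one_mul, mul_one, add_zero, zero_add]
    linear_combination (Af b + Af w) * hsq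
  · show γ' F * (Af (a*α) + Af (b*α+v+w) * γ' F) = Af (0*α) + Af (a*α+0+0) * γ' F
    simp only [map_add, map_mul, map_one, map_zero, zero_mul, one_mul, mul_one, add_zero, zero_add]
    linear_combination (Af b * Af α + Af v + Af w) * hsq
  · show γ' F * (Af (a*α) + Af (b*α+v*α+v+w) * γ' F) = Af (0*α) + Af (a*α+0*α+0+0) * γ' F
    simp only [map_add, map_mul, map_one, map_zero, zero_mul, one_mul, mul_one, add_zero, zero_add]
    linear_combination (Af b * Af α + Af v * Af α + Af v + Af w) * hsq
  · show γ' F * (Af (a) + Af (b+v*α+w) * γ' F) = Af (0) + Af (a+0*α+0) * γ' F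
    simp only [map_add, map_mul, map_one, map_zero, zero_mul, one_mul, mul_one, add_zero, zero_add]
    linear_combination (Af b + Af v * Af α + Af w) * hsq


lemma Evec_eq_zero {α a b v w : F} (h : Evec α a b v w = 0) :
    a = 0 ∧ b = 0 ∧ v = 0 ∧ w = 0 := by
  have h0 : Af a + Af b * γ' F = 0 := congrFun h 0
  have h1 : Af (a*α) + Af (b*α+v) * γ' F = 0 := congrFun h 1
  have h2 : Af a + Af (b+w) * γ' F = 0 := congrFun h 2
  obtain ⟨ha, hb⟩ := repr_zero h0
  have hv := (repr_zero h1).2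
  have hw := (repr_zero h2).2
  subst ha hb
  refine ⟨rfl, rfl, by simpa using hv, by simpa using hw⟩

lemma mem_code_iff {α : F} {c : Fin 6 → RChain F} :
    c ∈ Submodule.span (RChain F) {g1 α, g2 α, g3 F} ↔
      ∃ a b v w : F, c = Evec α a b v w := by
  constructor
  · intro hc
    induction hc using Submodule.span_induction with
    | mem x hx =>
      rcases hx with rfl | rfl | rfl
      · exact ⟨1, 0, 0, 0, (Evec_g1 α).symm⟩
      · exact ⟨0, 0, 1, 0, (Evec_g2 α).symm⟩
      · exact ⟨0, 0, 0, 1, (Evec_g3 α).symm⟩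
    | zero => exact ⟨0, 0, 0, 0, (Evec_zero α).symm⟩
    | add x y _ _ hx hy =>
      obtain ⟨a, b, v, w, rfl⟩ := hx
      obtain ⟨a', b', v', w', rfl⟩ := hy
      exact ⟨a+a', b+b', v+v', w+w', Evec_add α a b v w a' b' v' w'⟩
    | smul r x _ hx =>
      obtain ⟨a, b, v, w, rfl⟩ := hx
      obtain ⟨r0, r1, rfl⟩ := repr_exists r
      refine ⟨r0*a, r0*b + r1*a, r0*v, r0*w, ?_⟩
      rw [add_smul, mul_smul, Evec_smulG, Evec_smulA, Evec_smulA, Evec_add]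
      congr 1 <;> ring_nf
  · rintro ⟨a, b, v, w, rfl⟩
    have hg1 : g1 α ∈ Submodule.span (RChain F) {g1 α, g2 α, g3 F} :=
      Submodule.subset_span (by simp)
    have hg2 : g2 α ∈ Submodule.span (RChain F) {g1 α, g2 α, g3 F} :=
      Submodule.subset_span (by simp)
    have hg3 : g3 F ∈ Submodule.span (RChain F) {g1 α, g2 α, g3 F} :=
      Submodule.subset_span (by simp)
    have e1 : Evec α a b 0 0 = (Af a + Af b * γ' F) • g1 α := by
      rw [add_smul, mul_smul, ← Evec_g1 α, Evec_smulG, Evec_smulA, Evec_smulA, Evec_add]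
      congr 1 <;> ring_nf
    have e2 : Evec α 0 0 v 0 = Af v • g2 α := by
      rw [← Evec_g2 α, Evec_smulA]; congr 1 <;> ring_nf
    have e3 : Evec α 0 0 0 w = Af w • g3 F := by
      rw [← Evec_g3 α, Evec_smulA]; congr 1 <;> ring_nf
    have hsplit : Evec α a b v w = Evec α a b 0 0 + Evec α 0 0 v 0 + Evec α 0 0 0 w := by
      rw [Evec_add, Evec_add]; congr 1 <;> ring_nf
    rw [hsplit, e1, e2, e3]
    exact Submodule.add_mem _ (Submodule.add_mem _ (Submodule.smul_mem _ _ hg1)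
      (Submodule.smul_mem _ _ hg2)) (Submodule.smul_mem _ _ hg3)


noncomputable def wtx (e : F) : ℚ := wtHom (γ' F) 2 4 (Af e * γ' F)

lemma wtx_zero : wtx (0 : F) = 0 := by
  simp [wtx, wtHom]

lemma wtx_ne {e : F} (he : e ≠ 0) : wtx e = 4/3 := by
  have hne : Af e * γ' F ≠ 0 := by
    intro h
    apply he
    have h2 : Af (0:F) + Af e * γ' F = 0 := by rw [map_zero, zero_add]; exact h
    exact (repr_zero h2).2
  have hmem : Af e * γ' F ∈ Ideal.span {γ' F ^ (2-1)} := by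
    rw [show (2-1 : ℕ) = 1 from rfl, pow_one]
    exact Ideal.mem_span_singleton'.mpr ⟨Af e, rfl⟩
  simp only [wtHom, wtx, if_neg hne, if_pos hmem]
  norm_num

lemma wt_unit {a : F} (b : F) (ha : a ≠ 0) :
    wtHom (γ' F) 2 4 (Af a + Af b * γ' F) = 1 := by
  have hne : Af a + Af b * γ' F ≠ 0 := fun h => ha (repr_zero h).1
  have hnm : Af a + Af b * γ' F ∉ Ideal.span {γ' F ^ (2-1)} := by
    rw [show (2-1 : ℕ) = 1 from rfl, pow_one]
    intro hm
    exact ha (mem_span_gam_iff.mp hm)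
  simp only [wtHom, if_neg hne, if_neg hnm]

lemma wtHomV_Evec0 (α b v w : F) :
    wtHomV (γ' F) 2 4 (Evec α 0 b v w) =
      wtx b + wtx (b*α+v) + wtx (b+w) + wtx (b*α+v+w) + wtx (b*α+v*α+v+w)
        + wtx (b+v*α+w) := by
  simp only [wtHomV, Fin.sum_univ_six, Evec_apply0, Evec_apply1, Evec_apply2, Evec_apply3,
    Evec_apply4, Evec_apply5, wtx, zero_mul, map_zero, zero_add]

lemma wt_bound0 {α : F} (htwo : (2:F) = 0) (hα : α^2 = α+1) (hα0 : α ≠ 0)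
    (hab : α + 1 ≠ 0) (hS : ∀ e : F, e = 0 ∨ e = 1 ∨ e = α ∨ e = α + 1)
    (b v w : F) (hnz' : ¬(b = 0 ∧ v = 0 ∧ w = 0)) :
    16/3 ≤ wtHomV (γ' F) 2 4 (Evec α 0 b v w) := by
  rw [wtHomV_Evec0]
  have W0 := wtx_zero (F := F)
  have W1 : wtx (1:F) = 4/3 := wtx_ne one_ne_zero
  have Wa : wtx α = 4/3 := wtx_ne hα0
  have Wab : wtx (α+1) = 4/3 := wtx_ne hab
  rcases hS b with hb|hb|hb|hb <;> rcases hS v with hv|hv|hv|hv <;> rcases hS w with hw|hw|hw|hw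
  · exact absurd ⟨hb, hv, hw⟩ hnz'
  · rw [hb, hv, hw]
    rw [show (0*α+0*α+0+1 : F) = (1 : F) from by ring]
    rw [show (0*α+0+1 : F) = (1 : F) from by ring]
    rw [show (0+0*α+1 : F) = (1 : F) from by ring]
    rw [show (0*α+0 : F) = (0 : F) from by ring]
    rw [show (0+1 : F) = (1 : F) from by ring]
    simp only [W0, W1, Wa, Wab]
    norm_num
  · rw [hb, hv, hw]
    rw [show (0*α+0*α+0+α : F) = (α : F) from by ring]
    rw [show (0*α+0+α : F) = (α : F) from by ring]
    rw [show (0+0*α+α : F) = (α : F) from by ring]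
    rw [show (0*α+0 : F) = (0 : F) from by ring]
    rw [show (0+α : F) = (α : F) from by ring]
    simp only [W0, W1, Wa, Wab]
    norm_num
  · rw [hb, hv, hw]
    rw [show (0*α+0*α+0+(α+1) : F) = (α+1 : F) from by ring]
    rw [show (0*α+0+(α+1) : F) = (α+1 : F) from by ring]
    rw [show (0+0*α+(α+1) : F) = (α+1 : F) from by ring]
    rw [show (0*α+0 : F) = (0 : F) from by ring]
    rw [show (0+(α+1) : F) = (α+1 : F) from by ring]
    simp only [W0, W1, Wa, Wab]
    norm_num
  · rw [hb, hv, hw]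
    rw [show (0*α+1*α+1+0 : F) = (α+1 : F) from by ring]
    rw [show (0*α+1+0 : F) = (1 : F) from by ring]
    rw [show (0+1*α+0 : F) = (α : F) from by ring]
    rw [show (0*α+1 : F) = (1 : F) from by ring]
    rw [show (0+0 : F) = (0 : F) from by ring]
    simp only [W0, W1, Wa, Wab]
    norm_num
  · rw [hb, hv, hw]
    rw [show (0*α+1*α+1+1 : F) = (α : F) from by linear_combination (1 : F) * htwo]
    rw [show (0*α+1+1 : F) = (0 : F) from by linear_combination (1 : F) * htwo]
    rw [show (0+1*α+1 : F) = (α+1 : F) from by ring]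
    rw [show (0*α+1 : F) = (1 : F) from by ring]
    rw [show (0+1 : F) = (1 : F) from by ring]
    simp only [W0, W1, Wa, Wab]
    norm_num
  · rw [hb, hv, hw]
    rw [show (0*α+1*α+1+α : F) = (1 : F) from by linear_combination α * htwo]
    rw [show (0*α+1+α : F) = (α+1 : F) from by ring]
    rw [show (0+1*α+α : F) = (0 : F) from by linear_combination α * htwo]
    rw [show (0*α+1 : F) = (1 : F) from by ring]
    rw [show (0+α : F) = (α : F) from by ring]
    simp only [W0, W1, Wa, Wab]
    norm_num
  · rw [hb, hv, hw]
    rw [show (0*α+1*α+1+(α+1) : F) = (0 : F) from by linear_combination ((1 : F) + (1 : F) * α) * htwo]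
    rw [show (0*α+1+(α+1) : F) = (α : F) from by linear_combination (1 : F) * htwo]
    rw [show (0+1*α+(α+1) : F) = (1 : F) from by linear_combination α * htwo]
    rw [show (0*α+1 : F) = (1 : F) from by ring]
    rw [show (0+(α+1) : F) = (α+1 : F) from by ring]
    simp only [W0, W1, Wa, Wab]
    norm_num
  · rw [hb, hv, hw]
    rw [show (0*α+α*α+α+0 : F) = (1 : F) from by linear_combination hα + α * htwo]
    rw [show (0*α+α+0 : F) = (α : F) from by ring]
    rw [show (0+α*α+0 : F) = (α+1 : F) from by linear_combination hα]
    rw [show (0*α+α : F) = (α : F) from by ring]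
    rw [show (0+0 : F) = (0 : F) from by ring]
    simp only [W0, W1, Wa, Wab]
    norm_num
  · rw [hb, hv, hw]
    rw [show (0*α+α*α+α+1 : F) = (0 : F) from by linear_combination hα + ((1 : F) + (1 : F) * α) * htwo]
    rw [show (0*α+α+1 : F) = (α+1 : F) from by ring]
    rw [show (0+α*α+1 : F) = (α : F) from by linear_combination hα + (1 : F) * htwo]
    rw [show (0*α+α : F) = (α : F) from by ring]
    rw [show (0+1 : F) = (1 : F) from by ring]
    simp only [W0, W1, Wa, Wab]
    norm_num
  · rw [hb, hv, hw]
    rw [show (0*α+α*α+α+α : F) = (α+1 : F) from by linear_combination hα + α * htwo]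
    rw [show (0*α+α+α : F) = (0 : F) from by linear_combination α * htwo]
    rw [show (0+α*α+α : F) = (1 : F) from by linear_combination hα + α * htwo]
    rw [show (0*α+α : F) = (α : F) from by ring]
    rw [show (0+α : F) = (α : F) from by ring]
    simp only [W0, W1, Wa, Wab]
    norm_num
  · rw [hb, hv, hw]
    rw [show (0*α+α*α+α+(α+1) : F) = (α : F) from by linear_combination hα + ((1 : F) + (1 : F) * α) * htwo]
    rw [show (0*α+α+(α+1) : F) = (1 : F) from by linear_combination α * htwo]
    rw [show (0+α*α+(α+1) : F) = (0 : F) from by linear_combination hα + ((1 : F) + (1 : F) * α) * htwo]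
    rw [show (0*α+α : F) = (α : F) from by ring]
    rw [show (0+(α+1) : F) = (α+1 : F) from by ring]
    simp only [W0, W1, Wa, Wab]
    norm_num
  · rw [hb, hv, hw]
    rw [show (0*α+(α+1)*α+(α+1)+0 : F) = (α : F) from by linear_combination hα + ((1 : F) + (1 : F) * α) * htwo]
    rw [show (0*α+(α+1)+0 : F) = (α+1 : F) from by ring]
    rw [show (0+(α+1)*α+0 : F) = (1 : F) from by linear_combination hα + α * htwo]
    rw [show (0*α+(α+1) : F) = (α+1 : F) from by ring]
    rw [show (0+0 : F) = (0 : F) from by ring]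
    simp only [W0, W1, Wa, Wab]
    norm_num
  · rw [hb, hv, hw]
    rw [show (0*α+(α+1)*α+(α+1)+1 : F) = (α+1 : F) from by linear_combination hα + ((1 : F) + (1 : F) * α) * htwo]
    rw [show (0*α+(α+1)+1 : F) = (α : F) from by linear_combination (1 : F) * htwo]
    rw [show (0+(α+1)*α+1 : F) = (0 : F) from by linear_combination hα + ((1 : F) + (1 : F) * α) * htwo]
    rw [show (0*α+(α+1) : F) = (α+1 : F) from by ring]
    rw [show (0+1 : F) = (1 : F) from by ring]
    simp only [W0, W1, Wa, Wab]
    norm_num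
  · rw [hb, hv, hw]
    rw [show (0*α+(α+1)*α+(α+1)+α : F) = (0 : F) from by linear_combination hα + ((1 : F) + (2 : F) * α) * htwo]
    rw [show (0*α+(α+1)+α : F) = (1 : F) from by linear_combination α * htwo]
    rw [show (0+(α+1)*α+α : F) = (α+1 : F) from by linear_combination hα + α * htwo]
    rw [show (0*α+(α+1) : F) = (α+1 : F) from by ring]
    rw [show (0+α : F) = (α : F) from by ring]
    simp only [W0, W1, Wa, Wab]
    norm_num
  · rw [hb, hv, hw]
    rw [show (0*α+(α+1)*α+(α+1)+(α+1) : F) = (1 : F) from by linear_combination hα + ((1 : F) + (2 : F) * α) * htwo]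
    rw [show (0*α+(α+1)+(α+1) : F) = (0 : F) from by linear_combination ((1 : F) + (1 : F) * α) * htwo]
    rw [show (0+(α+1)*α+(α+1) : F) = (α : F) from by linear_combination hα + ((1 : F) + (1 : F) * α) * htwo]
    rw [show (0*α+(α+1) : F) = (α+1 : F) from by ring]
    rw [show (0+(α+1) : F) = (α+1 : F) from by ring]
    simp only [W0, W1, Wa, Wab]
    norm_num
  · rw [hb, hv, hw]
    rw [show (1*α+0*α+0+0 : F) = (α : F) from by ring]
    rw [show (1*α+0+0 : F) = (α : F) from by ring]
    rw [show (1+0*α+0 : F) = (1 : F) from by ring]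
    rw [show (1*α+0 : F) = (α : F) from by ring]
    rw [show (1+0 : F) = (1 : F) from by ring]
    simp only [W0, W1, Wa, Wab]
    norm_num
  · rw [hb, hv, hw]
    rw [show (1*α+0*α+0+1 : F) = (α+1 : F) from by ring]
    rw [show (1*α+0+1 : F) = (α+1 : F) from by ring]
    rw [show (1+0*α+1 : F) = (0 : F) from by linear_combination (1 : F) * htwo]
    rw [show (1*α+0 : F) = (α : F) from by ring]
    rw [show (1+1 : F) = (0 : F) from by linear_combination (1 : F) * htwo]
    simp only [W0, W1, Wa, Wab]
    norm_num
  · rw [hb, hv, hw]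
    rw [show (1*α+0*α+0+α : F) = (0 : F) from by linear_combination α * htwo]
    rw [show (1*α+0+α : F) = (0 : F) from by linear_combination α * htwo]
    rw [show (1+0*α+α : F) = (α+1 : F) from by ring]
    rw [show (1*α+0 : F) = (α : F) from by ring]
    rw [show (1+α : F) = (α+1 : F) from by ring]
    simp only [W0, W1, Wa, Wab]
    norm_num
  · rw [hb, hv, hw]
    rw [show (1*α+0*α+0+(α+1) : F) = (1 : F) from by linear_combination α * htwo]
    rw [show (1*α+0+(α+1) : F) = (1 : F) from by linear_combination α * htwo]
    rw [show (1+0*α+(α+1) : F) = (α : F) from by linear_combination (1 : F) * htwo]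
    rw [show (1*α+0 : F) = (α : F) from by ring]
    rw [show (1+(α+1) : F) = (α : F) from by linear_combination (1 : F) * htwo]
    simp only [W0, W1, Wa, Wab]
    norm_num
  · rw [hb, hv, hw]
    rw [show (1*α+1*α+1+0 : F) = (1 : F) from by linear_combination α * htwo]
    rw [show (1*α+1+0 : F) = (α+1 : F) from by ring]
    rw [show (1+1*α+0 : F) = (α+1 : F) from by ring]
    rw [show (1*α+1 : F) = (α+1 : F) from by ring]
    rw [show (1+0 : F) = (1 : F) from by ring]
    simp only [W0, W1, Wa, Wab]
    norm_num
  · rw [hb, hv, hw]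
    rw [show (1*α+1*α+1+1 : F) = (0 : F) from by linear_combination ((1 : F) + (1 : F) * α) * htwo]
    rw [show (1*α+1+1 : F) = (α : F) from by linear_combination (1 : F) * htwo]
    rw [show (1+1*α+1 : F) = (α : F) from by linear_combination (1 : F) * htwo]
    rw [show (1*α+1 : F) = (α+1 : F) from by ring]
    rw [show (1+1 : F) = (0 : F) from by linear_combination (1 : F) * htwo]
    simp only [W0, W1, Wa, Wab]
    norm_num
  · rw [hb, hv, hw]
    rw [show (1*α+1*α+1+α : F) = (α+1 : F) from by linear_combination α * htwo]
    rw [show (1*α+1+α : F) = (1 : F) from by linear_combination α * htwo]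
    rw [show (1+1*α+α : F) = (1 : F) from by linear_combination α * htwo]
    rw [show (1*α+1 : F) = (α+1 : F) from by ring]
    rw [show (1+α : F) = (α+1 : F) from by ring]
    simp only [W0, W1, Wa, Wab]
    norm_num
  · rw [hb, hv, hw]
    rw [show (1*α+1*α+1+(α+1) : F) = (α : F) from by linear_combination ((1 : F) + (1 : F) * α) * htwo]
    rw [show (1*α+1+(α+1) : F) = (0 : F) from by linear_combination ((1 : F) + (1 : F) * α) * htwo]
    rw [show (1+1*α+(α+1) : F) = (0 : F) from by linear_combination ((1 : F) + (1 : F) * α) * htwo]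
    rw [show (1*α+1 : F) = (α+1 : F) from by ring]
    rw [show (1+(α+1) : F) = (α : F) from by linear_combination (1 : F) * htwo]
    simp only [W0, W1, Wa, Wab]
    norm_num
  · rw [hb, hv, hw]
    rw [show (1*α+α*α+α+0 : F) = (α+1 : F) from by linear_combination hα + α * htwo]
    rw [show (1*α+α+0 : F) = (0 : F) from by linear_combination α * htwo]
    rw [show (1+α*α+0 : F) = (α : F) from by linear_combination hα + (1 : F) * htwo]
    rw [show (1*α+α : F) = (0 : F) from by linear_combination α * htwo]
    rw [show (1+0 : F) = (1 : F) from by ring]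
    simp only [W0, W1, Wa, Wab]
    norm_num
  · rw [hb, hv, hw]
    rw [show (1*α+α*α+α+1 : F) = (α : F) from by linear_combination hα + ((1 : F) + (1 : F) * α) * htwo]
    rw [show (1*α+α+1 : F) = (1 : F) from by linear_combination α * htwo]
    rw [show (1+α*α+1 : F) = (α+1 : F) from by linear_combination hα + (1 : F) * htwo]
    rw [show (1*α+α : F) = (0 : F) from by linear_combination α * htwo]
    rw [show (1+1 : F) = (0 : F) from by linear_combination (1 : F) * htwo]
    simp only [W0, W1, Wa, Wab]
    norm_num
  · rw [hb, hv, hw]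
    rw [show (1*α+α*α+α+α : F) = (1 : F) from by linear_combination hα + ((2 : F) * α) * htwo]
    rw [show (1*α+α+α : F) = (α : F) from by linear_combination α * htwo]
    rw [show (1+α*α+α : F) = (0 : F) from by linear_combination hα + ((1 : F) + (1 : F) * α) * htwo]
    rw [show (1*α+α : F) = (0 : F) from by linear_combination α * htwo]
    rw [show (1+α : F) = (α+1 : F) from by ring]
    simp only [W0, W1, Wa, Wab]
    norm_num
  · rw [hb, hv, hw]
    rw [show (1*α+α*α+α+(α+1) : F) = (0 : F) from by linear_combination hα + ((1 : F) + (2 : F) * α) * htwo]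
    rw [show (1*α+α+(α+1) : F) = (α+1 : F) from by linear_combination α * htwo]
    rw [show (1+α*α+(α+1) : F) = (1 : F) from by linear_combination hα + ((1 : F) + (1 : F) * α) * htwo]
    rw [show (1*α+α : F) = (0 : F) from by linear_combination α * htwo]
    rw [show (1+(α+1) : F) = (α : F) from by linear_combination (1 : F) * htwo]
    simp only [W0, W1, Wa, Wab]
    norm_num
  · rw [hb, hv, hw]
    rw [show (1*α+(α+1)*α+(α+1)+0 : F) = (0 : F) from by linear_combination hα + ((1 : F) + (2 : F) * α) * htwo]
    rw [show (1*α+(α+1)+0 : F) = (1 : F) from by linear_combination α * htwo]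
    rw [show (1+(α+1)*α+0 : F) = (0 : F) from by linear_combination hα + ((1 : F) + (1 : F) * α) * htwo]
    rw [show (1*α+(α+1) : F) = (1 : F) from by linear_combination α * htwo]
    rw [show (1+0 : F) = (1 : F) from by ring]
    simp only [W0, W1, Wa, Wab]
    norm_num
  · rw [hb, hv, hw]
    rw [show (1*α+(α+1)*α+(α+1)+1 : F) = (1 : F) from by linear_combination hα + ((1 : F) + (2 : F) * α) * htwo]
    rw [show (1*α+(α+1)+1 : F) = (0 : F) from by linear_combination ((1 : F) + (1 : F) * α) * htwo]
    rw [show (1+(α+1)*α+1 : F) = (1 : F) from by linear_combination hα + ((1 : F) + (1 : F) * α) * htwo]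
    rw [show (1*α+(α+1) : F) = (1 : F) from by linear_combination α * htwo]
    rw [show (1+1 : F) = (0 : F) from by linear_combination (1 : F) * htwo]
    simp only [W0, W1, Wa, Wab]
    norm_num
  · rw [hb, hv, hw]
    rw [show (1*α+(α+1)*α+(α+1)+α : F) = (α : F) from by linear_combination hα + ((1 : F) + (2 : F) * α) * htwo]
    rw [show (1*α+(α+1)+α : F) = (α+1 : F) from by linear_combination α * htwo]
    rw [show (1+(α+1)*α+α : F) = (α : F) from by linear_combination hα + ((1 : F) + (1 : F) * α) * htwo]
    rw [show (1*α+(α+1) : F) = (1 : F) from by linear_combination α * htwo]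
    rw [show (1+α : F) = (α+1 : F) from by ring]
    simp only [W0, W1, Wa, Wab]
    norm_num
  · rw [hb, hv, hw]
    rw [show (1*α+(α+1)*α+(α+1)+(α+1) : F) = (α+1 : F) from by linear_combination hα + ((1 : F) + (2 : F) * α) * htwo]
    rw [show (1*α+(α+1)+(α+1) : F) = (α : F) from by linear_combination ((1 : F) + (1 : F) * α) * htwo]
    rw [show (1+(α+1)*α+(α+1) : F) = (α+1 : F) from by linear_combination hα + ((1 : F) + (1 : F) * α) * htwo]
    rw [show (1*α+(α+1) : F) = (1 : F) from by linear_combination α * htwo]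
    rw [show (1+(α+1) : F) = (α : F) from by linear_combination (1 : F) * htwo]
    simp only [W0, W1, Wa, Wab]
    norm_num
  · rw [hb, hv, hw]
    rw [show (α*α+0*α+0+0 : F) = (α+1 : F) from by linear_combination hα]
    rw [show (α*α+0+0 : F) = (α+1 : F) from by linear_combination hα]
    rw [show (α+0*α+0 : F) = (α : F) from by ring]
    rw [show (α*α+0 : F) = (α+1 : F) from by linear_combination hα]
    rw [show (α+0 : F) = (α : F) from by ring]
    simp only [W0, W1, Wa, Wab]
    norm_num
  · rw [hb, hv, hw]
    rw [show (α*α+0*α+0+1 : F) = (α : F) from by linear_combination hα + (1 : F) * htwo]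
    rw [show (α*α+0+1 : F) = (α : F) from by linear_combination hα + (1 : F) * htwo]
    rw [show (α+0*α+1 : F) = (α+1 : F) from by ring]
    rw [show (α*α+0 : F) = (α+1 : F) from by linear_combination hα]
    simp only [W0, W1, Wa, Wab]
    norm_num
  · rw [hb, hv, hw]
    rw [show (α*α+0*α+0+α : F) = (1 : F) from by linear_combination hα + α * htwo]
    rw [show (α*α+0+α : F) = (1 : F) from by linear_combination hα + α * htwo]
    rw [show (α+0*α+α : F) = (0 : F) from by linear_combination α * htwo]
    rw [show (α*α+0 : F) = (α+1 : F) from by linear_combination hα]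
    rw [show (α+α : F) = (0 : F) from by linear_combination α * htwo]
    simp only [W0, W1, Wa, Wab]
    norm_num
  · rw [hb, hv, hw]
    rw [show (α*α+0*α+0+(α+1) : F) = (0 : F) from by linear_combination hα + ((1 : F) + (1 : F) * α) * htwo]
    rw [show (α*α+0+(α+1) : F) = (0 : F) from by linear_combination hα + ((1 : F) + (1 : F) * α) * htwo]
    rw [show (α+0*α+(α+1) : F) = (1 : F) from by linear_combination α * htwo]
    rw [show (α*α+0 : F) = (α+1 : F) from by linear_combination hα]
    rw [show (α+(α+1) : F) = (1 : F) from by linear_combination α * htwo]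
    simp only [W0, W1, Wa, Wab]
    norm_num
  · rw [hb, hv, hw]
    rw [show (α*α+1*α+1+0 : F) = (0 : F) from by linear_combination hα + ((1 : F) + (1 : F) * α) * htwo]
    rw [show (α*α+1+0 : F) = (α : F) from by linear_combination hα + (1 : F) * htwo]
    rw [show (α+1*α+0 : F) = (0 : F) from by linear_combination α * htwo]
    rw [show (α*α+1 : F) = (α : F) from by linear_combination hα + (1 : F) * htwo]
    rw [show (α+0 : F) = (α : F) from by ring]
    simp only [W0, W1, Wa, Wab]
    norm_num
  · rw [hb, hv, hw]
    rw [show (α*α+1*α+1+1 : F) = (1 : F) from by linear_combination hα + ((1 : F) + (1 : F) * α) * htwo]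
    rw [show (α*α+1+1 : F) = (α+1 : F) from by linear_combination hα + (1 : F) * htwo]
    rw [show (α+1*α+1 : F) = (1 : F) from by linear_combination α * htwo]
    rw [show (α*α+1 : F) = (α : F) from by linear_combination hα + (1 : F) * htwo]
    simp only [W0, W1, Wa, Wab]
    norm_num
  · rw [hb, hv, hw]
    rw [show (α*α+1*α+1+α : F) = (α : F) from by linear_combination hα + ((1 : F) + (1 : F) * α) * htwo]
    rw [show (α*α+1+α : F) = (0 : F) from by linear_combination hα + ((1 : F) + (1 : F) * α) * htwo]
    rw [show (α+1*α+α : F) = (α : F) from by linear_combination α * htwo]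
    rw [show (α*α+1 : F) = (α : F) from by linear_combination hα + (1 : F) * htwo]
    rw [show (α+α : F) = (0 : F) from by linear_combination α * htwo]
    simp only [W0, W1, Wa, Wab]
    norm_num
  · rw [hb, hv, hw]
    rw [show (α*α+1*α+1+(α+1) : F) = (α+1 : F) from by linear_combination hα + ((1 : F) + (1 : F) * α) * htwo]
    rw [show (α*α+1+(α+1) : F) = (1 : F) from by linear_combination hα + ((1 : F) + (1 : F) * α) * htwo]
    rw [show (α+1*α+(α+1) : F) = (α+1 : F) from by linear_combination α * htwo]
    rw [show (α*α+1 : F) = (α : F) from by linear_combination hα + (1 : F) * htwo]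
    rw [show (α+(α+1) : F) = (1 : F) from by linear_combination α * htwo]
    simp only [W0, W1, Wa, Wab]
    norm_num
  · rw [hb, hv, hw]
    rw [show (α*α+α*α+α+0 : F) = (α : F) from by linear_combination (2 : F) * hα + ((1 : F) + (1 : F) * α) * htwo]
    rw [show (α*α+α+0 : F) = (1 : F) from by linear_combination hα + α * htwo]
    rw [show (α+α*α+0 : F) = (1 : F) from by linear_combination hα + α * htwo]
    rw [show (α*α+α : F) = (1 : F) from by linear_combination hα + α * htwo]
    rw [show (α+0 : F) = (α : F) from by ring]
    simp only [W0, W1, Wa, Wab]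
    norm_num
  · rw [hb, hv, hw]
    rw [show (α*α+α*α+α+1 : F) = (α+1 : F) from by linear_combination (2 : F) * hα + ((1 : F) + (1 : F) * α) * htwo]
    rw [show (α*α+α+1 : F) = (0 : F) from by linear_combination hα + ((1 : F) + (1 : F) * α) * htwo]
    rw [show (α+α*α+1 : F) = (0 : F) from by linear_combination hα + ((1 : F) + (1 : F) * α) * htwo]
    rw [show (α*α+α : F) = (1 : F) from by linear_combination hα + α * htwo]
    simp only [W0, W1, Wa, Wab]
    norm_num
  · rw [hb, hv, hw]
    rw [show (α*α+α*α+α+α : F) = (0 : F) from by linear_combination (2 : F) * hα + ((1 : F) + (2 : F) * α) * htwo]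
    rw [show (α*α+α+α : F) = (α+1 : F) from by linear_combination hα + α * htwo]
    rw [show (α+α*α+α : F) = (α+1 : F) from by linear_combination hα + α * htwo]
    rw [show (α*α+α : F) = (1 : F) from by linear_combination hα + α * htwo]
    rw [show (α+α : F) = (0 : F) from by linear_combination α * htwo]
    simp only [W0, W1, Wa, Wab]
    norm_num
  · rw [hb, hv, hw]
    rw [show (α*α+α*α+α+(α+1) : F) = (1 : F) from by linear_combination (2 : F) * hα + ((1 : F) + (2 : F) * α) * htwo]
    rw [show (α*α+α+(α+1) : F) = (α : F) from by linear_combination hα + ((1 : F) + (1 : F) * α) * htwo]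
    rw [show (α+α*α+(α+1) : F) = (α : F) from by linear_combination hα + ((1 : F) + (1 : F) * α) * htwo]
    rw [show (α*α+α : F) = (1 : F) from by linear_combination hα + α * htwo]
    rw [show (α+(α+1) : F) = (1 : F) from by linear_combination α * htwo]
    simp only [W0, W1, Wa, Wab]
    norm_num
  · rw [hb, hv, hw]
    rw [show (α*α+(α+1)*α+(α+1)+0 : F) = (1 : F) from by linear_combination (2 : F) * hα + ((1 : F) + (2 : F) * α) * htwo]
    rw [show (α*α+(α+1)+0 : F) = (0 : F) from by linear_combination hα + ((1 : F) + (1 : F) * α) * htwo]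
    rw [show (α+(α+1)*α+0 : F) = (α+1 : F) from by linear_combination hα + α * htwo]
    rw [show (α*α+(α+1) : F) = (0 : F) from by linear_combination hα + ((1 : F) + (1 : F) * α) * htwo]
    rw [show (α+0 : F) = (α : F) from by ring]
    simp only [W0, W1, Wa, Wab]
    norm_num
  · rw [hb, hv, hw]
    rw [show (α*α+(α+1)*α+(α+1)+1 : F) = (0 : F) from by linear_combination (2 : F) * hα + ((2 : F) + (2 : F) * α) * htwo]
    rw [show (α*α+(α+1)+1 : F) = (1 : F) from by linear_combination hα + ((1 : F) + (1 : F) * α) * htwo]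
    rw [show (α+(α+1)*α+1 : F) = (α : F) from by linear_combination hα + ((1 : F) + (1 : F) * α) * htwo]
    rw [show (α*α+(α+1) : F) = (0 : F) from by linear_combination hα + ((1 : F) + (1 : F) * α) * htwo]
    simp only [W0, W1, Wa, Wab]
    norm_num
  · rw [hb, hv, hw]
    rw [show (α*α+(α+1)*α+(α+1)+α : F) = (α+1 : F) from by linear_combination (2 : F) * hα + ((1 : F) + (2 : F) * α) * htwo]
    rw [show (α*α+(α+1)+α : F) = (α : F) from by linear_combination hα + ((1 : F) + (1 : F) * α) * htwo]
    rw [show (α+(α+1)*α+α : F) = (1 : F) from by linear_combination hα + ((2 : F) * α) * htwo]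
    rw [show (α*α+(α+1) : F) = (0 : F) from by linear_combination hα + ((1 : F) + (1 : F) * α) * htwo]
    rw [show (α+α : F) = (0 : F) from by linear_combination α * htwo]
    simp only [W0, W1, Wa, Wab]
    norm_num
  · rw [hb, hv, hw]
    rw [show (α*α+(α+1)*α+(α+1)+(α+1) : F) = (α : F) from by linear_combination (2 : F) * hα + ((2 : F) + (2 : F) * α) * htwo]
    rw [show (α*α+(α+1)+(α+1) : F) = (α+1 : F) from by linear_combination hα + ((1 : F) + (1 : F) * α) * htwo]
    rw [show (α+(α+1)*α+(α+1) : F) = (0 : F) from by linear_combination hα + ((1 : F) + (2 : F) * α) * htwo]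
    rw [show (α*α+(α+1) : F) = (0 : F) from by linear_combination hα + ((1 : F) + (1 : F) * α) * htwo]
    rw [show (α+(α+1) : F) = (1 : F) from by linear_combination α * htwo]
    simp only [W0, W1, Wa, Wab]
    norm_num
  · rw [hb, hv, hw]
    rw [show ((α+1)*α+0*α+0+0 : F) = (1 : F) from by linear_combination hα + α * htwo]
    rw [show ((α+1)*α+0+0 : F) = (1 : F) from by linear_combination hα + α * htwo]
    rw [show ((α+1)+0*α+0 : F) = (α+1 : F) from by ring]
    rw [show ((α+1)*α+0 : F) = (1 : F) from by linear_combination hα + α * htwo]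
    rw [show ((α+1)+0 : F) = (α+1 : F) from by ring]
    rw [show ((α+1) : F) = (α+1 : F) from by ring]
    simp only [W0, W1, Wa, Wab]
    norm_num
  · rw [hb, hv, hw]
    rw [show ((α+1)*α+0*α+0+1 : F) = (0 : F) from by linear_combination hα + ((1 : F) + (1 : F) * α) * htwo]
    rw [show ((α+1)*α+0+1 : F) = (0 : F) from by linear_combination hα + ((1 : F) + (1 : F) * α) * htwo]
    rw [show ((α+1)+0*α+1 : F) = (α : F) from by linear_combination (1 : F) * htwo]
    rw [show ((α+1)*α+0 : F) = (1 : F) from by linear_combination hα + α * htwo]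
    rw [show ((α+1)+1 : F) = (α : F) from by linear_combination (1 : F) * htwo]
    rw [show ((α+1) : F) = (α+1 : F) from by ring]
    simp only [W0, W1, Wa, Wab]
    norm_num
  · rw [hb, hv, hw]
    rw [show ((α+1)*α+0*α+0+α : F) = (α+1 : F) from by linear_combination hα + α * htwo]
    rw [show ((α+1)*α+0+α : F) = (α+1 : F) from by linear_combination hα + α * htwo]
    rw [show ((α+1)+0*α+α : F) = (1 : F) from by linear_combination α * htwo]
    rw [show ((α+1)*α+0 : F) = (1 : F) from by linear_combination hα + α * htwo]
    rw [show ((α+1)+α : F) = (1 : F) from by linear_combination α * htwo]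
    rw [show ((α+1) : F) = (α+1 : F) from by ring]
    simp only [W0, W1, Wa, Wab]
    norm_num
  · rw [hb, hv, hw]
    rw [show ((α+1)*α+0*α+0+(α+1) : F) = (α : F) from by linear_combination hα + ((1 : F) + (1 : F) * α) * htwo]
    rw [show ((α+1)*α+0+(α+1) : F) = (α : F) from by linear_combination hα + ((1 : F) + (1 : F) * α) * htwo]
    rw [show ((α+1)+0*α+(α+1) : F) = (0 : F) from by linear_combination ((1 : F) + (1 : F) * α) * htwo]
    rw [show ((α+1)*α+0 : F) = (1 : F) from by linear_combination hα + α * htwo]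
    rw [show ((α+1)+(α+1) : F) = (0 : F) from by linear_combination ((1 : F) + (1 : F) * α) * htwo]
    rw [show ((α+1) : F) = (α+1 : F) from by ring]
    simp only [W0, W1, Wa, Wab]
    norm_num
  · rw [hb, hv, hw]
    rw [show ((α+1)*α+1*α+1+0 : F) = (α : F) from by linear_combination hα + ((1 : F) + (1 : F) * α) * htwo]
    rw [show ((α+1)*α+1+0 : F) = (0 : F) from by linear_combination hα + ((1 : F) + (1 : F) * α) * htwo]
    rw [show ((α+1)+1*α+0 : F) = (1 : F) from by linear_combination α * htwo]
    rw [show ((α+1)*α+1 : F) = (0 : F) from by linear_combination hα + ((1 : F) + (1 : F) * α) * htwo]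
    rw [show ((α+1)+0 : F) = (α+1 : F) from by ring]
    rw [show ((α+1) : F) = (α+1 : F) from by ring]
    simp only [W0, W1, Wa, Wab]
    norm_num
  · rw [hb, hv, hw]
    rw [show ((α+1)*α+1*α+1+1 : F) = (α+1 : F) from by linear_combination hα + ((1 : F) + (1 : F) * α) * htwo]
    rw [show ((α+1)*α+1+1 : F) = (1 : F) from by linear_combination hα + ((1 : F) + (1 : F) * α) * htwo]
    rw [show ((α+1)+1*α+1 : F) = (0 : F) from by linear_combination ((1 : F) + (1 : F) * α) * htwo]
    rw [show ((α+1)*α+1 : F) = (0 : F) from by linear_combination hα + ((1 : F) + (1 : F) * α) * htwo]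
    rw [show ((α+1)+1 : F) = (α : F) from by linear_combination (1 : F) * htwo]
    rw [show ((α+1) : F) = (α+1 : F) from by ring]
    simp only [W0, W1, Wa, Wab]
    norm_num
  · rw [hb, hv, hw]
    rw [show ((α+1)*α+1*α+1+α : F) = (0 : F) from by linear_combination hα + ((1 : F) + (2 : F) * α) * htwo]
    rw [show ((α+1)*α+1+α : F) = (α : F) from by linear_combination hα + ((1 : F) + (1 : F) * α) * htwo]
    rw [show ((α+1)+1*α+α : F) = (α+1 : F) from by linear_combination α * htwo]
    rw [show ((α+1)*α+1 : F) = (0 : F) from by linear_combination hα + ((1 : F) + (1 : F) * α) * htwo]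
    rw [show ((α+1)+α : F) = (1 : F) from by linear_combination α * htwo]
    rw [show ((α+1) : F) = (α+1 : F) from by ring]
    simp only [W0, W1, Wa, Wab]
    norm_num
  · rw [hb, hv, hw]
    rw [show ((α+1)*α+1*α+1+(α+1) : F) = (1 : F) from by linear_combination hα + ((1 : F) + (2 : F) * α) * htwo]
    rw [show ((α+1)*α+1+(α+1) : F) = (α+1 : F) from by linear_combination hα + ((1 : F) + (1 : F) * α) * htwo]
    rw [show ((α+1)+1*α+(α+1) : F) = (α : F) from by linear_combination ((1 : F) + (1 : F) * α) * htwo]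
    rw [show ((α+1)*α+1 : F) = (0 : F) from by linear_combination hα + ((1 : F) + (1 : F) * α) * htwo]
    rw [show ((α+1)+(α+1) : F) = (0 : F) from by linear_combination ((1 : F) + (1 : F) * α) * htwo]
    rw [show ((α+1) : F) = (α+1 : F) from by ring]
    simp only [W0, W1, Wa, Wab]
    norm_num
  · rw [hb, hv, hw]
    rw [show ((α+1)*α+α*α+α+0 : F) = (0 : F) from by linear_combination (2 : F) * hα + ((1 : F) + (2 : F) * α) * htwo]
    rw [show ((α+1)*α+α+0 : F) = (α+1 : F) from by linear_combination hα + α * htwo]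
    rw [show ((α+1)+α*α+0 : F) = (0 : F) from by linear_combination hα + ((1 : F) + (1 : F) * α) * htwo]
    rw [show ((α+1)*α+α : F) = (α+1 : F) from by linear_combination hα + α * htwo]
    rw [show ((α+1)+0 : F) = (α+1 : F) from by ring]
    rw [show ((α+1) : F) = (α+1 : F) from by ring]
    simp only [W0, W1, Wa, Wab]
    norm_num
  · rw [hb, hv, hw]
    rw [show ((α+1)*α+α*α+α+1 : F) = (1 : F) from by linear_combination (2 : F) * hα + ((1 : F) + (2 : F) * α) * htwo]
    rw [show ((α+1)*α+α+1 : F) = (α : F) from by linear_combination hα + ((1 : F) + (1 : F) * α) * htwo]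
    rw [show ((α+1)+α*α+1 : F) = (1 : F) from by linear_combination hα + ((1 : F) + (1 : F) * α) * htwo]
    rw [show ((α+1)*α+α : F) = (α+1 : F) from by linear_combination hα + α * htwo]
    rw [show ((α+1)+1 : F) = (α : F) from by linear_combination (1 : F) * htwo]
    rw [show ((α+1) : F) = (α+1 : F) from by ring]
    simp only [W0, W1, Wa, Wab]
    norm_num
  · rw [hb, hv, hw]
    rw [show ((α+1)*α+α*α+α+α : F) = (α : F) from by linear_combination (2 : F) * hα + ((1 : F) + (2 : F) * α) * htwo]
    rw [show ((α+1)*α+α+α : F) = (1 : F) from by linear_combination hα + ((2 : F) * α) * htwo]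
    rw [show ((α+1)+α*α+α : F) = (α : F) from by linear_combination hα + ((1 : F) + (1 : F) * α) * htwo]
    rw [show ((α+1)*α+α : F) = (α+1 : F) from by linear_combination hα + α * htwo]
    rw [show ((α+1)+α : F) = (1 : F) from by linear_combination α * htwo]
    rw [show ((α+1) : F) = (α+1 : F) from by ring]
    simp only [W0, W1, Wa, Wab]
    norm_num
  · rw [hb, hv, hw]
    rw [show ((α+1)*α+α*α+α+(α+1) : F) = (α+1 : F) from by linear_combination (2 : F) * hα + ((1 : F) + (2 : F) * α) * htwo]
    rw [show ((α+1)*α+α+(α+1) : F) = (0 : F) from by linear_combination hα + ((1 : F) + (2 : F) * α) * htwo]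
    rw [show ((α+1)+α*α+(α+1) : F) = (α+1 : F) from by linear_combination hα + ((1 : F) + (1 : F) * α) * htwo]
    rw [show ((α+1)*α+α : F) = (α+1 : F) from by linear_combination hα + α * htwo]
    rw [show ((α+1)+(α+1) : F) = (0 : F) from by linear_combination ((1 : F) + (1 : F) * α) * htwo]
    rw [show ((α+1) : F) = (α+1 : F) from by ring]
    simp only [W0, W1, Wa, Wab]
    norm_num
  · rw [hb, hv, hw]
    rw [show ((α+1)*α+(α+1)*α+(α+1)+0 : F) = (α+1 : F) from by linear_combination (2 : F) * hα + ((1 : F) + (2 : F) * α) * htwo]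
    rw [show ((α+1)*α+(α+1)+0 : F) = (α : F) from by linear_combination hα + ((1 : F) + (1 : F) * α) * htwo]
    rw [show ((α+1)+(α+1)*α+0 : F) = (α : F) from by linear_combination hα + ((1 : F) + (1 : F) * α) * htwo]
    rw [show ((α+1)*α+(α+1) : F) = (α : F) from by linear_combination hα + ((1 : F) + (1 : F) * α) * htwo]
    rw [show ((α+1)+0 : F) = (α+1 : F) from by ring]
    rw [show ((α+1) : F) = (α+1 : F) from by ring]
    simp only [W0, W1, Wa, Wab]
    norm_num
  · rw [hb, hv, hw]
    rw [show ((α+1)*α+(α+1)*α+(α+1)+1 : F) = (α : F) from by linear_combination (2 : F) * hα + ((2 : F) + (2 : F) * α) * htwo]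
    rw [show ((α+1)*α+(α+1)+1 : F) = (α+1 : F) from by linear_combination hα + ((1 : F) + (1 : F) * α) * htwo]
    rw [show ((α+1)+(α+1)*α+1 : F) = (α+1 : F) from by linear_combination hα + ((1 : F) + (1 : F) * α) * htwo]
    rw [show ((α+1)*α+(α+1) : F) = (α : F) from by linear_combination hα + ((1 : F) + (1 : F) * α) * htwo]
    rw [show ((α+1)+1 : F) = (α : F) from by linear_combination (1 : F) * htwo]
    rw [show ((α+1) : F) = (α+1 : F) from by ring]
    simp only [W0, W1, Wa, Wab]
    norm_num
  · rw [hb, hv, hw]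
    rw [show ((α+1)*α+(α+1)*α+(α+1)+α : F) = (1 : F) from by linear_combination (2 : F) * hα + ((1 : F) + (3 : F) * α) * htwo]
    rw [show ((α+1)*α+(α+1)+α : F) = (0 : F) from by linear_combination hα + ((1 : F) + (2 : F) * α) * htwo]
    rw [show ((α+1)+(α+1)*α+α : F) = (0 : F) from by linear_combination hα + ((1 : F) + (2 : F) * α) * htwo]
    rw [show ((α+1)*α+(α+1) : F) = (α : F) from by linear_combination hα + ((1 : F) + (1 : F) * α) * htwo]
    rw [show ((α+1)+α : F) = (1 : F) from by linear_combination α * htwo]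
    rw [show ((α+1) : F) = (α+1 : F) from by ring]
    simp only [W0, W1, Wa, Wab]
    norm_num
  · rw [hb, hv, hw]
    rw [show ((α+1)*α+(α+1)*α+(α+1)+(α+1) : F) = (0 : F) from by linear_combination (2 : F) * hα + ((2 : F) + (3 : F) * α) * htwo]
    rw [show ((α+1)*α+(α+1)+(α+1) : F) = (1 : F) from by linear_combination hα + ((1 : F) + (2 : F) * α) * htwo]
    rw [show ((α+1)+(α+1)*α+(α+1) : F) = (1 : F) from by linear_combination hα + ((1 : F) + (2 : F) * α) * htwo]
    rw [show ((α+1)*α+(α+1) : F) = (α : F) from by linear_combination hα + ((1 : F) + (1 : F) * α) * htwo]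
    rw [show ((α+1)+(α+1) : F) = (0 : F) from by linear_combination ((1 : F) + (1 : F) * α) * htwo]
    rw [show ((α+1) : F) = (α+1 : F) from by ring]
    simp only [W0, W1, Wa, Wab]
    norm_num

lemma wt_bound {α : F} (htwo : (2:F) = 0) (hα : α^2 = α+1) (hα0 : α ≠ 0)
    (hab : α + 1 ≠ 0) (hS : ∀ e : F, e = 0 ∨ e = 1 ∨ e = α ∨ e = α + 1)
    (a b v w : F) (hnz : ¬(a = 0 ∧ b = 0 ∧ v = 0 ∧ w = 0)) :
    16/3 ≤ wtHomV (γ' F) 2 4 (Evec α a b v w) := by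
  by_cases ha : a = 0
  · subst ha
    exact wt_bound0 htwo hα hα0 hab hS b v w
      (fun ⟨h1, h2, h3⟩ => hnz ⟨rfl, h1, h2, h3⟩)
  · have haα : a * α ≠ 0 := mul_ne_zero ha hα0
    simp only [wtHomV, Fin.sum_univ_six, Evec_apply0, Evec_apply1, Evec_apply2,
      Evec_apply3, Evec_apply4, Evec_apply5]
    rw [wt_unit b ha, wt_unit (b*α+v) haα, wt_unit (b+w) ha, wt_unit (b*α+v+w) haα,
      wt_unit (b*α+v*α+v+w) haα, wt_unit (b+v*α+w) ha]
    norm_num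

lemma smul_Evec (p : RChain F) (α a b v w : F) :
    ∃ p0 p1 : F, p • Evec α a b v w = Evec α (p0*a) (p0*b+p1*a) (p0*v) (p0*w) := by
  obtain ⟨p0, p1, rfl⟩ := repr_exists p
  refine ⟨p0, p1, ?_⟩
  rw [add_smul, mul_smul, Evec_smulG, Evec_smulA, Evec_smulA, Evec_add]
  congr 1 <;> ring_nf

lemma Evec_inj {α a b v w a' b' v' w' : F}
    (h : Evec α a b v w = Evec α a' b' v' w') :
    a = a' ∧ b = b' ∧ v = v' ∧ w = w' := by
  have h0 : Af a + Af b * γ' F = Af a' + Af b' * γ' F := congrFun h 0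
  have h1 : Af (a*α) + Af (b*α+v) * γ' F = Af (a'*α) + Af (b'*α+v') * γ' F := congrFun h 1
  have h2 : Af a + Af (b+w) * γ' F = Af a' + Af (b'+w') * γ' F := congrFun h 2
  have e0 : Af (a - a') + Af (b - b') * γ' F = 0 := by
    rw [map_sub, map_sub]; linear_combination h0
  have e1 : Af (a*α - a'*α) + Af ((b*α+v) - (b'*α+v')) * γ' F = 0 := by
    rw [map_sub, map_sub]; linear_combination h1
  have e2 : Af (a - a') + Af ((b+w) - (b'+w')) * γ' F = 0 := by
    rw [map_sub, map_sub]; linear_combination h2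
  have r0 := repr_zero e0
  have r1 := repr_zero e1
  have r2 := repr_zero e2
  have ha : a = a' := by linear_combination r0.1
  have hb : b = b' := by linear_combination r0.2
  refine ⟨ha, hb, by linear_combination r1.2 - α * r0.2, by linear_combination r2.2 - r0.2⟩

lemma key {α : F} (g h : Fin 6 → RChain F)
    (hg : g ∈ Submodule.span (RChain F) {g1 α, g2 α, g3 F})
    (hh : h ∈ Submodule.span (RChain F) {g1 α, g2 α, g3 F})
    (hle : Submodule.span (RChain F) {g1 α, g2 α, g3 F} ≤
      Submodule.span (RChain F) {g, h}) : False := by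
  obtain ⟨a, b, v, w, rfl⟩ := mem_code_iff.mp hg
  obtain ⟨a', b', v', w', rfl⟩ := mem_code_iff.mp hh
  have hg1 : g1 α ∈ Submodule.span (RChain F) {g1 α, g2 α, g3 F} :=
    Submodule.subset_span (by simp)
  have hg2 : g2 α ∈ Submodule.span (RChain F) {g1 α, g2 α, g3 F} :=
    Submodule.subset_span (by simp)
  have hg3 : g3 F ∈ Submodule.span (RChain F) {g1 α, g2 α, g3 F} :=
    Submodule.subset_span (by simp)
  -- g1
  obtain ⟨p, q, hpq⟩ := Submodule.mem_span_pair.mp (hle hg1)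
  obtain ⟨p0, p1, hp⟩ := smul_Evec p α a b v w
  obtain ⟨q0, q1, hq⟩ := smul_Evec q α a' b' v' w'
  rw [hp, hq, Evec_add, ← Evec_g1 α] at hpq
  obtain ⟨f11, -, f12, f13⟩ := Evec_inj hpq
  -- g2
  obtain ⟨r, s, hrs⟩ := Submodule.mem_span_pair.mp (hle hg2)
  obtain ⟨r0, r1, hr⟩ := smul_Evec r α a b v w
  obtain ⟨s0, s1, hs⟩ := smul_Evec s α a' b' v' w'
  rw [hr, hs, Evec_add, ← Evec_g2 α] at hrs
  obtain ⟨f21, -, f22, f23⟩ := Evec_inj hrs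
  -- g3
  obtain ⟨t, u, htu⟩ := Submodule.mem_span_pair.mp (hle hg3)
  obtain ⟨t0, t1, ht⟩ := smul_Evec t α a b v w
  obtain ⟨u0, u1, hu⟩ := smul_Evec u α a' b' v' w'
  rw [ht, hu, Evec_add, ← Evec_g3 α] at htu
  obtain ⟨f31, -, f32, f33⟩ := Evec_inj htu
  -- rank contradiction
  set M : Matrix (Fin 3) (Fin 2) F := !![p0, q0; r0, s0; t0, u0] with hM
  set N : Matrix (Fin 2) (Fin 3) F := !![a, v, w; a', v', w'] with hN
  have hMN : M * N = 1 := by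
    ext i j
    fin_cases i <;> fin_cases j <;>
      simp [hM, hN, Matrix.mul_apply, Fin.sum_univ_two, Matrix.one_apply] <;>
      first
        | linear_combination f11 | linear_combination f12 | linear_combination f13
        | linear_combination f21 | linear_combination f22 | linear_combination f23
        | linear_combination f31 | linear_combination f32 | linear_combination f33
  have h2 : (M * N).rank ≤ N.rank := Matrix.rank_mul_le_right M N
  have h3 : N.rank ≤ 2 := by
    simpa using Matrix.rank_le_card_height N
  rw [hMN] at h2
  have h1 : (1 : Matrix (Fin 3) (Fin 3) F).rank = 3 := by
    rw [Matrix.rank_one]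
    simp
  omega

theorem main_aux (hF : Nat.card F = 4) (α : F) (hα : α ^ 2 = α + 1) :
    IsCodeRank (Submodule.span (RChain F) {g1 α, g2 α, g3 F}) 3 ∧
    IsLeast {x : ℚ | ∃ c ∈ Submodule.span (RChain F) {g1 α, g2 α, g3 F},
        c ≠ 0 ∧ wtHomV (γ' F) 2 4 c = x} (16 / 3 : ℚ) ∧
    (∀ c ∈ Submodule.span (RChain F) {g1 α, g2 α, g3 F},
        c ≠ 0 → (4 : ℚ) / 3 * ((6 : ℚ) - 3) < wtHomV (γ' F) 2 4 c) ∧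
    (∃ c ∈ Submodule.span (RChain F) {g1 α, g2 α, g3 F},
        ∃ i, c i ∉ Ideal.span {γ' F}) := by
  -- field facts
  have hfin : Finite F := Nat.finite_of_card_ne_zero (by rw [hF]; norm_num)
  have hFT : Fintype F := Fintype.ofFinite F
  have hcard : Fintype.card F = 4 := by rw [← Nat.card_eq_fintype_card, hF]
  have hα0 : α ≠ 0 := by
    intro h
    rw [h] at hα
    norm_num at hα
  have h3 : α ^ (Fintype.card F - 1) = 1 := FiniteField.pow_card_sub_one_eq_one α hα0
  rw [hcard] at h3
  norm_num at h3
  have h2a : (2:F) * α = 0 := by linear_combination (-α - 1) * hα + h3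
  have htwo : (2:F) = 0 := by
    rcases mul_eq_zero.mp h2a with h | h
    · exact h
    · exact absurd h hα0
  have hα1 : α ≠ 1 := by
    intro h
    rw [h] at hα
    have h10 : (1:F) = 0 := by linear_combination -hα
    exact one_ne_zero h10
  have hab : α + 1 ≠ 0 := by
    intro h
    apply hα1
    linear_combination h - htwo
  have h0a : (0:F) ≠ α := Ne.symm hα0
  have h0ab : (0:F) ≠ α + 1 := Ne.symm hab
  have h1a : (1:F) ≠ α := Ne.symm hα1
  have h1ab : (1:F) ≠ α + 1 := by
    intro h
    exact hα0 (by linear_combination -h)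
  have haab : α ≠ α + 1 := by
    intro h
    exact (one_ne_zero : (1:F) ≠ 0) (by linear_combination -h)
  have hS : ∀ e : F, e = 0 ∨ e = 1 ∨ e = α ∨ e = α + 1 := by
    have huniv : ({0, 1, α, α+1} : Finset F) = Finset.univ := by
      apply Finset.eq_univ_of_card
      rw [hcard]
      rw [Finset.card_insert_of_notMem (by simp [h0a, h0ab]),
        Finset.card_insert_of_notMem (by simp [h1a, h1ab]),
        Finset.card_insert_of_notMem (by simp [haab]), Finset.card_singleton]
    intro e
    have he : e ∈ ({0, 1, α, α+1} : Finset F) := huniv ▸ Finset.mem_univ e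
    simpa using he
  have hone : (1 : RChain F) ≠ 0 := by
    intro h
    have h2 : Af (1:F) + Af (0:F) * γ' F = 0 := by
      rw [map_zero, map_one, zero_mul, add_zero]; exact h
    exact one_ne_zero (repr_zero h2).1
  have hgam : (γ' F) ≠ 0 := by
    intro h
    have h2 : Af (0:F) + Af (1:F) * γ' F = 0 := by
      rw [map_zero, map_one, zero_add, one_mul]; exact h
    exact one_ne_zero (repr_zero h2).2
  have h12 : g1 α ≠ g2 α := by
    intro h
    have h0 : (1 : RChain F) = 0 := congrFun h 0
    exact hone h0
  have h13 : g1 α ≠ g3 F := by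
    intro h
    have h0 : (1 : RChain F) = 0 := congrFun h 0
    exact hone h0
  have h23 : g2 α ≠ g3 F := by
    intro h
    have h0 : (γ' F) = 0 := congrFun h 1
    exact hgam h0
  refine ⟨⟨⟨{g1 α, g2 α, g3 F}, ?_, ?_⟩, ?_⟩, ⟨⟨Evec α 0 0 1 1, ?_, ?_, ?_⟩, ?_⟩, ?_, ?_⟩
  · -- card = 3
    rw [Finset.card_insert_of_notMem (by simp [h12, h13]),
      Finset.card_insert_of_notMem (by simp [h23]), Finset.card_singleton]
  · -- span of coe = span of set
    congr 1
    simp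
  · -- lower bound 3
    rintro k ⟨S, hcardS, hspan⟩
    by_contra hk
    push_neg at hk
    interval_cases k
    · -- k = 0
      rw [Finset.card_eq_zero] at hcardS
      subst hcardS
      have hg1 : g1 α ∈ Submodule.span (RChain F) {g1 α, g2 α, g3 F} :=
        Submodule.subset_span (by simp)
      rw [← hspan] at hg1
      simp only [Finset.coe_empty, Submodule.span_empty, Submodule.mem_bot] at hg1
      exact hone (congrFun hg1 0)
    · -- k = 1
      rw [Finset.card_eq_one] at hcardS
      obtain ⟨g, rfl⟩ := hcardS
      have hgmem : g ∈ Submodule.span (RChain F) {g1 α, g2 α, g3 F} := by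
        rw [← hspan]
        exact Submodule.subset_span (by simp)
      refine key g g hgmem hgmem ?_
      rw [← hspan]
      simp [Set.pair_eq_singleton]
    · -- k = 2
      rw [Finset.card_eq_two] at hcardS
      obtain ⟨g, h, hgh, rfl⟩ := hcardS
      have hgmem : g ∈ Submodule.span (RChain F) {g1 α, g2 α, g3 F} := by
        rw [← hspan]; exact Submodule.subset_span (by simp)
      have hhmem : h ∈ Submodule.span (RChain F) {g1 α, g2 α, g3 F} := by
        rw [← hspan]; exact Submodule.subset_span (by simp)
      refine key g h hgmem hhmem ?_
      rw [← hspan]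
      simp
  · -- membership of the weight-16/3 codeword
    exact mem_code_iff.mpr ⟨0, 0, 1, 1, rfl⟩
  · -- nonzero
    intro h
    exact one_ne_zero ((Evec_eq_zero h).2.2.1)
  · -- weight = 16/3
    rw [wtHomV_Evec0]
    have W0 := wtx_zero (F := F)
    have W1 : wtx (1:F) = 4/3 := wtx_ne one_ne_zero
    have Wa : wtx α = 4/3 := wtx_ne hα0
    have Wab : wtx (α+1) = 4/3 := wtx_ne hab
    rw [show (0*α+1*α+1+1 : F) = (α : F) from by linear_combination (1 : F) * htwo]
    rw [show (0*α+1+1 : F) = (0 : F) from by linear_combination (1 : F) * htwo]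
    rw [show (0+1*α+1 : F) = (α+1 : F) from by ring]
    rw [show (0*α+1 : F) = (1 : F) from by ring]
    rw [show (0+1 : F) = (1 : F) from by ring]
    rw [W0, W1, Wa, Wab]
    norm_num
  · -- lower bound of weights
    rintro x ⟨c, hc, hc0, rfl⟩
    obtain ⟨a, b, v, w, rfl⟩ := mem_code_iff.mp hc
    refine wt_bound htwo hα hα0 hab hS a b v w ?_
    rintro ⟨rfl, rfl, rfl, rfl⟩
    exact hc0 (Evec_zero α)
  · -- MHD
    intro c hc hc0
    obtain ⟨a, b, v, w, rfl⟩ := mem_code_iff.mp hc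
    have hb := wt_bound htwo hα hα0 hab hS a b v w
      (by rintro ⟨rfl, rfl, rfl, rfl⟩; exact hc0 (Evec_zero α))
    nlinarith [hb]
  · -- not contained in (γ)⁶
    refine ⟨g1 α, Submodule.subset_span (by simp), 0, ?_⟩
    intro hmem
    have h1m : (1 : RChain F) ∈ Ideal.span {γ' F} := hmem
    obtain ⟨t, ht⟩ := Ideal.mem_span_singleton'.mp h1m
    have hg0 : γ' F = t * (γ' F)^2 := by linear_combination (-(γ' F)) * ht
    rw [gam_sq, mul_zero] at hg0
    exact hgam hg0

end MHDAux

theorem mhd_exceptional_example {F : Type*} [Field F] (hF : Nat.card F = 4)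
    (α : F) (hα : α ^ 2 = α + 1) :
    IsCodeRank (Submodule.span (RChain F)
        {![1, algebraMap F (RChain F) α, 1, algebraMap F (RChain F) α,
            algebraMap F (RChain F) α, 1],
         ![0, AdjoinRoot.root _, 0, AdjoinRoot.root _,
            (algebraMap F (RChain F) α + 1) * AdjoinRoot.root _,
            algebraMap F (RChain F) α * AdjoinRoot.root _],
         ![0, 0, AdjoinRoot.root _, AdjoinRoot.root _, AdjoinRoot.root _,
            AdjoinRoot.root _]}) 3 ∧
    IsLeast {w : ℚ | ∃ c ∈ Submodule.span (RChain F)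
        {![1, algebraMap F (RChain F) α, 1, algebraMap F (RChain F) α,
            algebraMap F (RChain F) α, 1],
         ![0, AdjoinRoot.root _, 0, AdjoinRoot.root _,
            (algebraMap F (RChain F) α + 1) * AdjoinRoot.root _,
            algebraMap F (RChain F) α * AdjoinRoot.root _],
         ![0, 0, AdjoinRoot.root _, AdjoinRoot.root _, AdjoinRoot.root _,
            AdjoinRoot.root _]},
        c ≠ 0 ∧ wtHomV (AdjoinRoot.root _) 2 4 c = w} (16 / 3 : ℚ) ∧
    (∀ c ∈ Submodule.span (RChain F)
        {![1, algebraMap F (RChain F) α, 1, algebraMap F (RChain F) α,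
            algebraMap F (RChain F) α, 1],
         ![0, AdjoinRoot.root _, 0, AdjoinRoot.root _,
            (algebraMap F (RChain F) α + 1) * AdjoinRoot.root _,
            algebraMap F (RChain F) α * AdjoinRoot.root _],
         ![0, 0, AdjoinRoot.root _, AdjoinRoot.root _, AdjoinRoot.root _,
            AdjoinRoot.root _]},
        c ≠ 0 → (4 : ℚ) / 3 * ((6 : ℚ) - 3) < wtHomV (AdjoinRoot.root _) 2 4 c) ∧
    (∃ c ∈ Submodule.span (RChain F)
        {![1, algebraMap F (RChain F) α, 1, algebraMap F (RChain F) α,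
            algebraMap F (RChain F) α, 1],
         ![0, AdjoinRoot.root _, 0, AdjoinRoot.root _,
            (algebraMap F (RChain F) α + 1) * AdjoinRoot.root _,
            algebraMap F (RChain F) α * AdjoinRoot.root _],
         ![0, 0, AdjoinRoot.root _, AdjoinRoot.root _, AdjoinRoot.root _,
            AdjoinRoot.root _]},
        ∃ i, c i ∉ Ideal.span {(AdjoinRoot.root (Polynomial.X ^ 2 : Polynomial F))}) :=
  MHDAux.main_aux hF α hα
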